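/- Let κ > 0, β > 0, and c ∈ [−1, 1]. Define R(η) = √(κ² + β²·sinh²η + 2κβ·sinh η·c) and the reduced free energy F(η) = β·cosh η − log I₀(R(η)) + log I₀(κ). Then as η → 0, F(η) = β − β·(I₁(κ)/I₀(κ))·η·c + O(η²); that is, the function η ↦ F(η) − β + β·(I₁(κ)/I₀(κ))·η·c is O(η²) as η → 0. -/

import Mathlib

noncomputable section

open Real

/-- The modified Bessel function of the first kind `I₀`. -/
def besselI0 (x : ℝ) : ℝ := (1 / (2 * π)) * ∫ θ in (0:ℝ)..(2 * π), Real.exp (x * Real.cos θ)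

/-- The modified Bessel function of the first kind `I₁`. -/
def besselI1 (x : ℝ) : ℝ :=
  (1 / (2 * π)) * ∫ θ in (0:ℝ)..(2 * π), Real.exp (x * Real.cos θ) * Real.cos θ

/-- Auxiliary family of integrals. -/
def bessAux (n : ℕ) (x : ℝ) : ℝ :=
  ∫ θ in (0:ℝ)..(2 * π), Real.exp (x * Real.cos θ) * Real.cos θ ^ n

lemma bessAux_cont (n : ℕ) (y : ℝ) :
    Continuous fun θ : ℝ => Real.exp (y * Real.cos θ) * Real.cos θ ^ n := by
  continuity

lemma bessAux_hasDerivAt (n : ℕ) (x : ℝ) :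
    HasDerivAt (bessAux n) (bessAux (n + 1) x) x := by
  have key := (intervalIntegral.hasDerivAt_integral_of_dominated_loc_of_deriv_le
    (F := fun y θ => Real.exp (y * Real.cos θ) * Real.cos θ ^ n)
    (F' := fun y θ => Real.exp (y * Real.cos θ) * Real.cos θ ^ (n + 1))
    (bound := fun _ => Real.exp (|x| + 1)) (a := (0:ℝ)) (b := 2 * π) (x₀ := x)
    (μ := MeasureTheory.volume)
    (Metric.ball_mem_nhds x one_pos)
    (Filter.Eventually.of_forall fun y => ((bessAux_cont n y).aestronglyMeasurable))
    ((bessAux_cont n x).intervalIntegrable _ _)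
    ((bessAux_cont (n + 1) x).aestronglyMeasurable)
    (Filter.Eventually.of_forall fun t _ y hy => ?_)
    (intervalIntegrable_const)
    (Filter.Eventually.of_forall fun t _ y _ => ?_)).2
  · exact key
  · -- bound
    have h1 : |Real.cos t| ≤ 1 := Real.abs_cos_le_one t
    have hy' : |y| ≤ |x| + 1 := by
      have := mem_ball_iff_norm.mp hy
      have : |y - x| < 1 := this
      calc |y| = |x + (y - x)| := by ring_nf
        _ ≤ |x| + |y - x| := abs_add_le _ _
        _ ≤ |x| + 1 := by linarith
    have h2 : y * Real.cos t ≤ |x| + 1 := by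
      calc y * Real.cos t ≤ |y * Real.cos t| := le_abs_self _
        _ = |y| * |Real.cos t| := abs_mul _ _
        _ ≤ (|x| + 1) * 1 := by
            apply mul_le_mul hy' h1 (abs_nonneg _) (by positivity)
        _ = |x| + 1 := mul_one _
    calc ‖Real.exp (y * Real.cos t) * Real.cos t ^ (n + 1)‖
        = Real.exp (y * Real.cos t) * |Real.cos t| ^ (n + 1) := by
          rw [norm_mul, norm_pow, Real.norm_eq_abs, Real.norm_eq_abs,
            abs_of_pos (Real.exp_pos _)]
      _ ≤ Real.exp (y * Real.cos t) * 1 := by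
          apply mul_le_mul_of_nonneg_left _ (Real.exp_pos _).le
          exact pow_le_one₀ (abs_nonneg _) h1
      _ ≤ Real.exp (|x| + 1) := by
          rw [mul_one]; exact Real.exp_le_exp.mpr h2
  · -- differentiability of integrand
    have h := (((hasDerivAt_id y).mul_const (Real.cos t)).exp).mul_const (Real.cos t ^ n)
    simp only [id_eq, one_mul] at h
    refine h.congr_deriv ?_
    ring

lemma besselI0_eq (x : ℝ) : besselI0 x = (1 / (2 * π)) * bessAux 0 x := by
  simp [besselI0, bessAux]

lemma besselI1_eq (x : ℝ) : besselI1 x = (1 / (2 * π)) * bessAux 1 x := by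
  simp [besselI1, bessAux]

lemma hasDerivAt_besselI0 (x : ℝ) : HasDerivAt besselI0 (besselI1 x) x := by
  have h := (bessAux_hasDerivAt 0 x).const_mul (1 / (2 * π))
  have : besselI0 = fun y => (1 / (2 * π)) * bessAux 0 y := funext besselI0_eq
  rw [this, besselI1_eq]
  exact h

lemma hasDerivAt_besselI1 (x : ℝ) :
    HasDerivAt besselI1 ((1 / (2 * π)) * bessAux 2 x) x := by
  have h := (bessAux_hasDerivAt 1 x).const_mul (1 / (2 * π))
  have : besselI1 = fun y => (1 / (2 * π)) * bessAux 1 y := funext besselI1_eq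
  rw [this]
  exact h

lemma besselI0_pos (x : ℝ) : 0 < besselI0 x := by
  unfold besselI0
  have hπ : (0:ℝ) < 2 * π := by positivity
  apply mul_pos (by positivity)
  apply intervalIntegral.intervalIntegral_pos_of_pos_on
  · exact (Real.continuous_exp.comp (by continuity)).intervalIntegrable _ _
  · intro t _
    exact Real.exp_pos _
  · exact hπ

/-- Second-order Taylor big-O lemma. -/
lemma bigO_of_deriv {f f' : ℝ → ℝ} {r : ℝ} (hr : 0 < r)
    (hd : ∀ x ∈ Metric.ball (0:ℝ) r, HasDerivAt f (f' x) x)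
    (hf0 : f 0 = 0) (hf'0 : f' 0 = 0) (hdiff : DifferentiableAt ℝ f' 0) :
    f =O[nhds 0] fun x : ℝ => x ^ 2 := by
  have h1 : (fun x : ℝ => f' x) =O[nhds 0] fun x : ℝ => x := by
    have := hdiff.isBigO_sub
    simpa [hf'0] using this
  obtain ⟨C, hC0, hC⟩ := h1.exists_nonneg
  rw [Asymptotics.isBigOWith_iff] at hC
  rw [Metric.eventually_nhds_iff] at hC
  obtain ⟨δ, hδ, hCb⟩ := hC
  rw [Asymptotics.isBigO_iff]
  refine ⟨C, ?_⟩
  rw [Metric.eventually_nhds_iff]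
  refine ⟨min r δ, lt_min hr hδ, fun {x} hx => ?_⟩
  rw [Real.dist_eq, sub_zero] at hx
  have hxr : |x| < r := lt_of_lt_of_le hx (min_le_left _ _)
  have hxδ : |x| < δ := lt_of_lt_of_le hx (min_le_right _ _)
  have hsub : Set.uIcc (0:ℝ) x ⊆ Metric.ball (0:ℝ) r := by
    intro t ht
    rw [Metric.mem_ball, Real.dist_eq, sub_zero]
    have h1 : min 0 x ≤ t := ht.1
    have h2 : t ≤ max 0 x := ht.2
    have : |t| ≤ |x| := by
      rw [abs_le]
      constructor
      · calc -|x| = min 0 (-|x|) := by simp [min_eq_right, neg_nonpos.mpr (abs_nonneg x)]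
          _ ≤ min 0 x := min_le_min le_rfl (neg_abs_le x)
          _ ≤ t := h1
      · calc t ≤ max 0 x := h2
          _ ≤ max 0 |x| := max_le_max le_rfl (le_abs_self x)
          _ = |x| := by simp [abs_nonneg]
    exact lt_of_le_of_lt this hxr
  have habs : ∀ t ∈ Set.uIcc (0:ℝ) x, |t| ≤ |x| := by
    intro t ht
    have := hsub ht
    rw [abs_le]
    constructor
    · calc -|x| = min 0 (-|x|) := by simp [min_eq_right, neg_nonpos.mpr (abs_nonneg x)]
        _ ≤ min 0 x := min_le_min le_rfl (neg_abs_le x)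
        _ ≤ t := ht.1
    · calc t ≤ max 0 x := ht.2
        _ ≤ max 0 |x| := max_le_max le_rfl (le_abs_self x)
        _ = |x| := by simp [abs_nonneg]
  have key : ‖f x - f 0‖ ≤ (C * |x|) * ‖x - 0‖ := by
    apply Convex.norm_image_sub_le_of_norm_hasDerivWithin_le
      (f' := f') (fun t ht => (hd t (hsub ht)).hasDerivWithinAt)
      (fun t ht => ?_) (convex_uIcc _ _) (Set.left_mem_uIcc) (Set.right_mem_uIcc)
    have hbt : ‖f' t‖ ≤ C * ‖t‖ := by
      apply hCb
      rw [Real.dist_eq, sub_zero]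
      exact lt_of_le_of_lt (habs t ht) hxδ
    calc ‖f' t‖ ≤ C * ‖t‖ := hbt
      _ ≤ C * |x| := by
          apply mul_le_mul_of_nonneg_left _ hC0
          exact habs t ht
  rw [hf0, sub_zero, sub_zero] at key
  calc ‖f x‖ ≤ (C * |x|) * ‖x‖ := key
    _ = C * ‖x ^ 2‖ := by
        rw [Real.norm_eq_abs, Real.norm_eq_abs, abs_pow]
        ring

theorem stmt_11 (κ β c : ℝ) (hκ : 0 < κ) (hβ : 0 < β) (hc : c ∈ Set.Icc (-1 : ℝ) 1)
    (R F : ℝ → ℝ)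
    (hR : ∀ η : ℝ, R η = Real.sqrt (κ ^ 2 + β ^ 2 * Real.sinh η ^ 2 +
      2 * κ * β * Real.sinh η * c))
    (hF : ∀ η : ℝ, F η =
      β * Real.cosh η - Real.log (besselI0 (R η)) + Real.log (besselI0 κ)) :
    (fun η : ℝ => F η - β + β * (besselI1 κ / besselI0 κ) * η * c)
      =O[nhds 0] fun η : ℝ => η ^ 2 := by
  set s : ℝ → ℝ := fun η => κ ^ 2 + β ^ 2 * Real.sinh η ^ 2 + 2 * κ * β * Real.sinh η * c
    with hs_def
  set s' : ℝ → ℝ := fun η => β ^ 2 * (2 * Real.sinh η * Real.cosh η) +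
    2 * κ * β * Real.cosh η * c with hs'_def
  have hs0 : s 0 = κ ^ 2 := by simp [hs_def]
  have hs'0 : s' 0 = 2 * κ * β * c := by simp [hs'_def]
  have hsd : ∀ η, HasDerivAt s (s' η) η := by
    intro η
    have h1 := ((Real.hasDerivAt_sinh η).pow 2).const_mul (β ^ 2)
    have h2 := ((Real.hasDerivAt_sinh η).const_mul (2 * κ * β)).mul_const c
    have h := ((hasDerivAt_const η (κ ^ 2)).add h1).add h2
    refine h.congr_deriv ?_
    rw [hs'_def]; norm_num
  -- ball where s is positive
  have hscont : Continuous s := by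
    apply Continuous.add
    apply Continuous.add continuous_const
    · exact (continuous_const.mul ((Real.continuous_sinh).pow 2))
    · exact ((continuous_const.mul Real.continuous_sinh).mul continuous_const)
  have hev : ∀ᶠ η in nhds (0:ℝ), 0 < s η := by
    have : (0:ℝ) < s 0 := by rw [hs0]; positivity
    exact (hscont.tendsto 0).eventually (eventually_gt_nhds this)
  obtain ⟨r, hr, hball⟩ := Metric.eventually_nhds_iff.mp hev
  set q : ℝ := besselI1 κ / besselI0 κ with hq_def
  set G' : ℝ → ℝ := fun η =>
    (β * Real.sinh η - (besselI0 (Real.sqrt (s η)))⁻¹ *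
      (besselI1 (Real.sqrt (s η)) * (1 / (2 * Real.sqrt (s η)) * s' η))) + β * q * c
    with hG'_def
  have hsqrt0 : Real.sqrt (s 0) = κ := by rw [hs0]; exact Real.sqrt_sq hκ.le
  have hG : (fun η : ℝ => F η - β + β * q * η * c) =
      fun η => (β * Real.cosh η - Real.log (besselI0 (Real.sqrt (s η))) +
        Real.log (besselI0 κ)) - β + β * q * η * c := by
    funext η; rw [hF, hR]
  rw [hG]
  apply bigO_of_deriv hr (f' := G')
  · -- derivative on the ball
    intro x hx
    have hsx : 0 < s x := hball (by simpa [Real.dist_eq] using Metric.mem_ball.mp hx)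
    have hcosh : HasDerivAt (fun t => β * Real.cosh t) (β * Real.sinh x) x :=
      (Real.hasDerivAt_cosh x).const_mul β
    have hsqrt : HasDerivAt (fun t => Real.sqrt (s t)) (1 / (2 * Real.sqrt (s x)) * s' x) x :=
      (Real.hasDerivAt_sqrt hsx.ne').comp x (hsd x)
    have hI0 : HasDerivAt (fun t => besselI0 (Real.sqrt (s t)))
        (besselI1 (Real.sqrt (s x)) * (1 / (2 * Real.sqrt (s x)) * s' x)) x :=
      by have := (hasDerivAt_besselI0 (Real.sqrt (s x))).comp (h₂ := besselI0) x hsqrt; exact this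
    have hlogout : HasDerivAt Real.log (besselI0 (Real.sqrt (s x)))⁻¹
        (besselI0 (Real.sqrt (s x))) := Real.hasDerivAt_log (besselI0_pos _).ne'
    have hlog : HasDerivAt (fun t => Real.log (besselI0 (Real.sqrt (s t))))
        ((besselI0 (Real.sqrt (s x)))⁻¹ *
          (besselI1 (Real.sqrt (s x)) * (1 / (2 * Real.sqrt (s x)) * s' x))) x :=
      hlogout.comp (h₂ := Real.log) x hI0
    have hlin : HasDerivAt (fun t : ℝ => β * q * t * c) (β * q * c) x := by
      have := ((hasDerivAt_id x).const_mul (β * q)).mul_const c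
      refine this.congr_deriv ?_
      ring
    have := (((hcosh.sub hlog).add_const (Real.log (besselI0 κ))).sub_const β).add hlin
    exact this
  · -- value at 0
    simp [hsqrt0]
  · -- derivative at 0
    rw [hG'_def]
    simp only [Real.sinh_zero, hsqrt0, hs'0]
    have hI0κ : besselI0 κ ≠ 0 := (besselI0_pos κ).ne'
    rw [hq_def]
    field_simp
    ring
  · -- differentiability of G' at 0
    have hds : DifferentiableAt ℝ s 0 := (hsd 0).differentiableAt
    have hds' : DifferentiableAt ℝ s' 0 := by
      rw [hs'_def]
      apply DifferentiableAt.add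
      · exact (((Real.differentiable_sinh 0).const_mul 2).mul
          (Real.differentiable_cosh 0)).const_mul (β ^ 2)
      · exact ((Real.differentiable_cosh 0).const_mul (2 * κ * β)).mul_const c
    have hsne : s 0 ≠ 0 := by rw [hs0]; positivity
    have hdsqrt : DifferentiableAt ℝ (fun t => Real.sqrt (s t)) 0 :=
      ((Real.hasDerivAt_sqrt hsne).comp 0 (hsd 0)).differentiableAt
    have hdI0c : DifferentiableAt ℝ (fun t => besselI0 (Real.sqrt (s t))) 0 :=
      ((hasDerivAt_besselI0 (Real.sqrt (s 0))).comp (h₂ := besselI0) 0 hdsqrt.hasDerivAt).differentiableAt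
    have hdI1c : DifferentiableAt ℝ (fun t => besselI1 (Real.sqrt (s t))) 0 :=
      ((hasDerivAt_besselI1 (Real.sqrt (s 0))).comp (h₂ := besselI1) 0 hdsqrt.hasDerivAt).differentiableAt
    have hI0ne : besselI0 (Real.sqrt (s 0)) ≠ 0 := (besselI0_pos _).ne'
    have h2ne : 2 * Real.sqrt (s 0) ≠ 0 := by
      rw [hsqrt0]; positivity
    rw [hG'_def]
    apply DifferentiableAt.add_const
    apply DifferentiableAt.sub
    · exact (Real.differentiable_sinh 0).const_mul β
    · apply DifferentiableAt.mul (hdI0c.inv hI0ne)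
      apply DifferentiableAt.mul hdI1c
      apply DifferentiableAt.mul _ hds'
      exact (differentiableAt_const 1).div ((differentiableAt_const 2).mul hdsqrt) h2ne
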